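/- arXiv:1407.6344 — 3 statements merged into one kernel-verified Lean document; each statement's English description precedes it below -/
import Mathlib

section
/- For integers n, b > 0 and any j with 0 ≤ j ≤ n-1, the sum ∑_{i=0}^{n} (-1)^i ((b+n-i-1)!/(b-1)!) C(n,i) [b+j]_i equals 0, where [k]_l = k(k-1)⋯(k-l+1) denotes the falling factorial. -/
open Polynomial Finset

lemma alt_sum_poly : ∀ (n : ℕ) (P : Polynomial ℤ), P.natDegree < n →
    ∑ i ∈ Finset.range (n + 1), (-1 : ℤ) ^ i * (n.choose i : ℤ) * P.eval (i : ℤ) = 0 := by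
  intro n
  induction n with
  | zero => intro P h; omega
  | succ n ih =>
    intro P h
    set Q : Polynomial ℤ := P - P.comp (Polynomial.X + 1) with hQdef
    have evalQ : ∀ x : ℤ, Q.eval x = P.eval x - P.eval (x + 1) := by
      intro x; simp [hQdef]
    have step : ∑ i ∈ Finset.range (n + 2), (-1 : ℤ) ^ i * ((n+1).choose i : ℤ) * P.eval (i : ℤ)
        = ∑ i ∈ Finset.range (n + 1), (-1 : ℤ) ^ i * (n.choose i : ℤ) * Q.eval (i : ℤ) := by
      calc ∑ i ∈ Finset.range (n + 2), (-1 : ℤ) ^ i * ((n+1).choose i : ℤ) * P.eval (i : ℤ)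
          = (∑ i ∈ Finset.range (n + 1),
              (-1 : ℤ) ^ (i+1) * ((n+1).choose (i+1) : ℤ) * P.eval ((i:ℤ) + 1))
            + (-1 : ℤ) ^ 0 * ((n+1).choose 0 : ℤ) * P.eval ((0:ℕ) : ℤ) := by
            rw [Finset.sum_range_succ' (fun i => (-1 : ℤ) ^ i * ((n+1).choose i : ℤ) * P.eval (i : ℤ)) (n+1)]
            push_cast
            ring_nf
        _ = (∑ i ∈ Finset.range (n + 1),
              ((-1 : ℤ) ^ (i+1) * (n.choose (i+1) : ℤ) * P.eval ((i:ℤ) + 1)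
               + (-1 : ℤ) ^ (i+1) * (n.choose i : ℤ) * P.eval ((i:ℤ) + 1)))
            + (-1 : ℤ) ^ 0 * (n.choose 0 : ℤ) * P.eval ((0:ℕ) : ℤ) := by
            congr 1
            · apply Finset.sum_congr rfl; intro i _
              rw [Nat.choose_succ_succ]; push_cast; ring
            · norm_num
        _ = ((∑ i ∈ Finset.range (n + 1),
              (-1 : ℤ) ^ (i+1) * (n.choose (i+1) : ℤ) * P.eval (((i+1 : ℕ) : ℤ)))
            + (-1 : ℤ) ^ 0 * (n.choose 0 : ℤ) * P.eval ((0:ℕ) : ℤ))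
            + ∑ i ∈ Finset.range (n + 1),
              (-1 : ℤ) ^ (i+1) * (n.choose i : ℤ) * P.eval ((i:ℤ) + 1) := by
            rw [Finset.sum_add_distrib]; push_cast; ring
        _ = (∑ i ∈ Finset.range (n + 2), (-1 : ℤ) ^ i * (n.choose i : ℤ) * P.eval (i : ℤ))
            + ∑ i ∈ Finset.range (n + 1),
              (-1 : ℤ) ^ (i+1) * (n.choose i : ℤ) * P.eval ((i:ℤ) + 1) := by
            rw [Finset.sum_range_succ' (fun i => (-1 : ℤ) ^ i * (n.choose i : ℤ) * P.eval (i : ℤ)) (n+1)]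
        _ = (∑ i ∈ Finset.range (n + 1), (-1 : ℤ) ^ i * (n.choose i : ℤ) * P.eval (i : ℤ))
            + ∑ i ∈ Finset.range (n + 1),
              (-1 : ℤ) ^ (i+1) * (n.choose i : ℤ) * P.eval ((i:ℤ) + 1) := by
            rw [Finset.sum_range_succ]
            simp [Nat.choose_succ_self]
        _ = ∑ i ∈ Finset.range (n + 1), (-1 : ℤ) ^ i * (n.choose i : ℤ) * Q.eval (i : ℤ) := by
            rw [← Finset.sum_add_distrib]
            apply Finset.sum_congr rfl; intro i _
            rw [evalQ]; ring
    rw [step]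
    by_cases hQ0 : Q = 0
    · simp [hQ0]
    · apply ih
      have hP0 : P ≠ 0 := by
        intro h0
        apply hQ0
        simp [hQdef, h0]
      have hdP : 0 < P.natDegree := by
        rcases Nat.eq_zero_or_pos P.natDegree with h0 | h0
        · exfalso
          obtain ⟨c, rfl⟩ := Polynomial.natDegree_eq_zero.mp h0
          simp [hQdef] at hQ0
        · exact h0
      have hXd : (Polynomial.X + 1 : Polynomial ℤ).natDegree = 1 := by
        simpa using Polynomial.natDegree_X_add_C (1 : ℤ)
      have hndc : (P.comp (Polynomial.X + 1)).natDegree = P.natDegree := by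
        rw [Polynomial.natDegree_comp, hXd, mul_one]
      have hc0 : P.comp (Polynomial.X + 1) ≠ 0 := by
        intro h0
        rw [h0] at hndc
        simp at hndc
        omega
      have hdeg : Q.degree < P.degree := by
        apply Polynomial.degree_sub_lt _ hP0
        · rw [Polynomial.leadingCoeff_comp (by omega : (Polynomial.X + 1 : Polynomial ℤ).natDegree ≠ 0)]
          have : (Polynomial.X + 1 : Polynomial ℤ).leadingCoeff = 1 := by
            simpa using Polynomial.leadingCoeff_X_add_C (1 : ℤ)
          rw [this, one_pow, mul_one]
        · rw [Polynomial.degree_eq_natDegree hP0, Polynomial.degree_eq_natDegree hc0, hndc]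
      have := Polynomial.natDegree_lt_natDegree hQ0 hdeg
      omega

/-- For integers `n, b > 0` and `0 ≤ j ≤ n-1`, the sum
`∑_{i=0}^{n} (-1)^i ((b+n-i-1)!/(b-1)!) C(n,i) [b+j]_i = 0`,
where `[k]_l` is the falling factorial. -/
theorem derivative_vanishes (n b j : ℕ) (hn : 0 < n) (hb : 0 < b) (hj : j ≤ n - 1) :
    ∑ i ∈ Finset.range (n + 1),
      (-1 : ℤ) ^ i * ((Nat.factorial (b + n - i - 1) / Nat.factorial (b - 1) : ℕ) : ℤ) *
        (n.choose i : ℤ) * (Nat.descFactorial (b + j) i : ℤ) = 0 := by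
  set m := n - 1 - j with hm
  set P : Polynomial ℤ := (descPochhammer ℤ m).comp (Polynomial.C ((b : ℤ) + n - 1) - Polynomial.X)
    with hP
  have hPdeg : P.natDegree < n := by
    have h1 : (Polynomial.C ((b : ℤ) + n - 1) - Polynomial.X).natDegree = 1 := by
      rw [show (Polynomial.C ((b : ℤ) + n - 1) - Polynomial.X)
            = -(Polynomial.X - Polynomial.C ((b : ℤ) + n - 1)) by ring,
        Polynomial.natDegree_neg, Polynomial.natDegree_X_sub_C]
    rw [hP, Polynomial.natDegree_comp, h1, mul_one, descPochhammer_natDegree]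
    omega
  have key : ∀ i ∈ Finset.range (n + 1),
      (-1 : ℤ) ^ i * ((Nat.factorial (b + n - i - 1) / Nat.factorial (b - 1) : ℕ) : ℤ) *
        (n.choose i : ℤ) * (Nat.descFactorial (b + j) i : ℤ)
      = ((b + j).descFactorial (j + 1) : ℤ) * ((-1 : ℤ) ^ i * (n.choose i : ℤ) * P.eval (i : ℤ)) := by
    intro i hi
    rw [Finset.mem_range] at hi
    have hin : i ≤ n := by omega
    -- div to descFactorial
    have e0 : (Nat.factorial (b + n - i - 1) / Nat.factorial (b - 1) : ℕ)
        = (b + n - 1 - i).descFactorial (n - i) := by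
      rw [Nat.descFactorial_eq_div (by omega : n - i ≤ b + n - 1 - i)]
      congr 1
      · congr 1; omega
      · congr 1; omega
    -- nat identity
    have e5 : (b + n - 1 - i).descFactorial (n - i) * (b + j).descFactorial i
        = (b + j).descFactorial (j + 1) * (b + n - 1 - i).descFactorial m := by
      rcases le_or_gt i (b + j) with hle | hlt
      · have e1 : (b - 1).factorial * (b + n - 1 - i).descFactorial (n - i)
            = (b + n - 1 - i).factorial := by
          rw [show (b - 1).factorial = ((b + n - 1 - i) - (n - i)).factorial by congr 1; omega]
          exact Nat.factorial_mul_descFactorial (by omega)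
        have e2 : (b + j - i).factorial * (b + j).descFactorial i = (b + j).factorial := by
          rw [show (b + j - i).factorial = ((b + j) - i).factorial by rfl]
          exact Nat.factorial_mul_descFactorial (by omega)
        have e3 : (b - 1).factorial * (b + j).descFactorial (j + 1) = (b + j).factorial := by
          rw [show (b - 1).factorial = ((b + j) - (j + 1)).factorial by congr 1; omega]
          exact Nat.factorial_mul_descFactorial (by omega)
        have e4 : (b + j - i).factorial * (b + n - 1 - i).descFactorial m
            = (b + n - 1 - i).factorial := by
          rw [show (b + j - i).factorial = ((b + n - 1 - i) - m).factorial by congr 1; omega]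
          exact Nat.factorial_mul_descFactorial (by omega)
        apply Nat.eq_of_mul_eq_mul_left
          (Nat.mul_pos (b - 1).factorial_pos (b + j - i).factorial_pos)
        calc (b - 1).factorial * (b + j - i).factorial *
              ((b + n - 1 - i).descFactorial (n - i) * (b + j).descFactorial i)
            = ((b - 1).factorial * (b + n - 1 - i).descFactorial (n - i)) *
              ((b + j - i).factorial * (b + j).descFactorial i) := by ring
          _ = (b + n - 1 - i).factorial * (b + j).factorial := by rw [e1, e2]
          _ = ((b - 1).factorial * (b + j).descFactorial (j + 1)) *
              ((b + j - i).factorial * (b + n - 1 - i).descFactorial m) := by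
              rw [e3, e4]; ring
          _ = (b - 1).factorial * (b + j - i).factorial *
              ((b + j).descFactorial (j + 1) * (b + n - 1 - i).descFactorial m) := by ring
      · rw [Nat.descFactorial_of_lt hlt, Nat.descFactorial_of_lt (show b + n - 1 - i < m by omega)]
        simp
    -- eval P
    have e6 : P.eval (i : ℤ) = ((b + n - 1 - i).descFactorial m : ℤ) := by
      rw [hP, Polynomial.eval_comp]
      simp only [Polynomial.eval_sub, Polynomial.eval_C, Polynomial.eval_X]
      rw [show (b : ℤ) + n - 1 - i = ((b + n - 1 - i : ℕ) : ℤ) by omega]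
      exact descPochhammer_eval_eq_descFactorial ℤ _ _
    have e5z : ((b + n - 1 - i).descFactorial (n - i) : ℤ) * ((b + j).descFactorial i : ℤ)
        = ((b + j).descFactorial (j + 1) : ℤ) * ((b + n - 1 - i).descFactorial m : ℤ) := by
      exact_mod_cast congrArg (Nat.cast : ℕ → ℤ) e5
    rw [e0, e6]
    linear_combination ((-1 : ℤ) ^ i * (n.choose i : ℤ)) * e5z
  rw [Finset.sum_congr rfl key, ← Finset.mul_sum, alt_sum_poly n P hPdeg, mul_zero]
end

section
/- For integers n, a, b > 0 with a(n+1) ≠ bn, the sum ∑_{i=0}^{n} (-1)^i (a+i) [b+i-1]_{b-1} C(b+n+1, b+i+1) is nonzero; in fact it equals ± [-1]_{b-1} (bn - a(n+1)) up to sign. -/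
open Finset Nat

lemma key_frac (n : ℕ) : ∀ b : ℕ,
    ∑ i ∈ range (n + 1), (-1 : ℚ) ^ i * (n.choose i) / ((b : ℚ) + 1 + i)
      = (n ! : ℚ) * (b ! : ℚ) / ((b + 1 + n)! : ℚ) := by
  induction n with
  | zero =>
      intro b
      have h1 : ((b+1+0)! : ℚ) = ((b:ℚ)+1) * (b ! : ℚ) := by
        rw [show b+1+0 = b+1 by ring, Nat.factorial_succ]; push_cast; ring
      have hb1 : ((b:ℚ)+1) ≠ 0 := by positivity
      have hf : ((b ! : ℚ)) ≠ 0 := by exact_mod_cast (Nat.factorial_pos b).ne'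
      rw [Finset.sum_range_one, h1]
      push_cast
      field_simp
      simp
  | succ n ih =>
      intro b
      have hsplit : ∑ i ∈ range (n + 2), (-1 : ℚ) ^ i * ((n+1).choose i) / ((b : ℚ) + 1 + i)
          = (∑ i ∈ range (n + 1), (-1 : ℚ) ^ i * (n.choose i) / ((b : ℚ) + 1 + i))
            - (∑ i ∈ range (n + 1), (-1 : ℚ) ^ i * (n.choose i) / ((b : ℚ) + 1 + 1 + i)) := by
        have key1 : ∑ i ∈ range (n + 2), (-1 : ℚ) ^ i * ((n+1).choose i) / ((b : ℚ) + 1 + i)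
            = (∑ i ∈ range (n + 1), (-1 : ℚ) ^ (i+1) * (n.choose i) / ((b : ℚ) + 1 + (i+1)))
              + ∑ i ∈ range (n + 2), (-1 : ℚ) ^ i * (n.choose i) / ((b : ℚ) + 1 + i) := by
          rw [Finset.sum_range_succ' (fun i => (-1 : ℚ) ^ i * ((n+1).choose i) / ((b : ℚ) + 1 + i)),
              Finset.sum_range_succ' (fun i => (-1 : ℚ) ^ i * (n.choose i) / ((b : ℚ) + 1 + i))]
          simp only [Nat.choose_succ_succ, Nat.cast_add, Nat.choose_zero_right, Nat.cast_one,
            Nat.cast_ofNat, pow_zero, one_mul, Nat.cast_zero, add_zero]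
          rw [← add_assoc, ← Finset.sum_add_distrib]
          congr 1
          apply Finset.sum_congr rfl
          intro i _
          push_cast
          ring
        have h3 : ∑ i ∈ range (n + 2), (-1 : ℚ) ^ i * (n.choose i) / ((b : ℚ) + 1 + i)
            = ∑ i ∈ range (n + 1), (-1 : ℚ) ^ i * (n.choose i) / ((b : ℚ) + 1 + i) := by
          rw [Finset.sum_range_succ, Nat.choose_eq_zero_of_lt (by omega)]
          simp
        have h4 : (∑ i ∈ range (n + 1), (-1 : ℚ) ^ (i+1) * (n.choose i) / ((b : ℚ) + 1 + (i+1)))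
            = -∑ i ∈ range (n + 1), (-1 : ℚ) ^ i * (n.choose i) / ((b : ℚ) + 1 + 1 + i) := by
          rw [← Finset.sum_neg_distrib]
          apply Finset.sum_congr rfl
          intro i _
          push_cast
          ring
        rw [key1, h3, h4]
        ring
      rw [hsplit, ih b]
      have ihb1 := ih (b+1)
      push_cast at ihb1 ⊢
      rw [show ((b:ℚ) + 1 + 1) = ((b:ℚ)+1) + 1 by ring] at *
      rw [ihb1]
      have e1 : ((b + 1 + (n+1))! : ℚ) = ((b:ℚ)+1+n+1) * ((b+1+n)! : ℚ) := by
        rw [show b+1+(n+1) = (b+1+n)+1 by ring, Nat.factorial_succ]; push_cast; ring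
      have e2 : (((b+1) + 1 + n)! : ℚ) = ((b:ℚ)+1+n+1) * ((b+1+n)! : ℚ) := by
        rw [show (b+1)+1+n = (b+1+n)+1 by ring, Nat.factorial_succ]; push_cast; ring
      have e3 : (((b+1))! : ℚ) = ((b:ℚ)+1) * (b ! : ℚ) := by
        rw [Nat.factorial_succ]; push_cast; ring
      have e4 : (((n+1))! : ℚ) = ((n:ℚ)+1) * (n ! : ℚ) := by
        rw [Nat.factorial_succ]; push_cast; ring
      push_cast at e1 e2 e3 e4
      rw [e1, e2, e3, e4]
      have h5 : ((b+1+n)! : ℚ) ≠ 0 := by exact_mod_cast (Nat.factorial_pos _).ne'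
      have h6 : ((b:ℚ)+1+n+1) ≠ 0 := by positivity
      field_simp
      ring

lemma desc_cast (c i : ℕ) : (((c+i).descFactorial c : ℚ)) = ((c+i)! : ℚ) / (i ! : ℚ) := by
  have h := Nat.factorial_mul_descFactorial (show c ≤ c + i by omega)
  rw [show c + i - c = i by omega] at h
  have hi : ((i ! : ℚ)) ≠ 0 := by exact_mod_cast (Nat.factorial_pos i).ne'
  field_simp
  have := congrArg (Nat.cast : ℕ → ℚ) h
  push_cast at this
  linarith

lemma per_term (n c a i : ℕ) (hi : i ≤ n) :
    ((a:ℚ) + i) * ((c+i).descFactorial c : ℚ) * ((c+n+2).choose (c+i+2) : ℚ)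
      = ((c+n+2)! : ℚ) / (n ! : ℚ) * (n.choose i : ℚ)
          * (((a:ℚ) - c - 1) / ((c:ℚ)+1+i) + ((c:ℚ)+2-(a:ℚ)) / ((c:ℚ)+2+i)) := by
  rw [desc_cast]
  rw [Nat.cast_choose ℚ (show c+i+2 ≤ c+n+2 by omega),
      Nat.cast_choose ℚ hi,
      show c+n+2 - (c+i+2) = n - i by omega]
  have e1 : ((c+i+2)! : ℚ) = ((c:ℚ)+i+2) * ((c:ℚ)+i+1) * ((c+i)! : ℚ) := by
    rw [show c+i+2 = (c+i+1)+1 by ring, Nat.factorial_succ, show c+i+1 = (c+i)+1 by ring,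
        Nat.factorial_succ]
    push_cast; ring
  rw [e1]
  have f1 : ((c+i)! : ℚ) ≠ 0 := by exact_mod_cast (Nat.factorial_pos _).ne'
  have f2 : ((i)! : ℚ) ≠ 0 := by exact_mod_cast (Nat.factorial_pos _).ne'
  have f3 : ((n-i)! : ℚ) ≠ 0 := by exact_mod_cast (Nat.factorial_pos _).ne'
  have f4 : ((n)! : ℚ) ≠ 0 := by exact_mod_cast (Nat.factorial_pos _).ne'
  have f5 : ((c:ℚ)+i+2) ≠ 0 := by positivity
  have f6 : ((c:ℚ)+i+1) ≠ 0 := by positivity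
  have f7 : ((c:ℚ)+1+i) ≠ 0 := by positivity
  have f8 : ((c:ℚ)+2+i) ≠ 0 := by positivity
  field_simp
  ring

lemma main_sum_eval (n c a : ℕ) :
    ∑ i ∈ Finset.range (n + 1),
        (-1 : ℚ) ^ i * ((a : ℚ) + i) * ((c+i).descFactorial c : ℚ) * ((c+n+2).choose (c+i+2) : ℚ)
      = (c ! : ℚ) * ((a:ℚ) * (n+1) - ((c:ℚ)+1) * n) := by
  have step : ∀ i ∈ Finset.range (n+1),
      (-1 : ℚ) ^ i * ((a : ℚ) + i) * ((c+i).descFactorial c : ℚ) * ((c+n+2).choose (c+i+2) : ℚ)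
        = (((c+n+2)! : ℚ) / (n ! : ℚ) * ((a:ℚ) - c - 1)) * ((-1:ℚ)^i * (n.choose i) / ((c:ℚ)+1+i))
          + (((c+n+2)! : ℚ) / (n ! : ℚ) * (((c:ℚ)+2-(a:ℚ)))) * ((-1:ℚ)^i * (n.choose i) / (((c+1:ℕ):ℚ)+1+i)) := by
    intro i hi
    rw [Finset.mem_range] at hi
    have := per_term n c a i (by omega)
    push_cast at this ⊢
    linear_combination ((-1:ℚ)^i) * this
  rw [Finset.sum_congr rfl step, Finset.sum_add_distrib, ← Finset.mul_sum, ← Finset.mul_sum,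
      key_frac n c, key_frac n (c+1)]
  have e1 : ((c+n+2)! : ℚ) = ((c:ℚ)+n+2) * ((c+1+n)! : ℚ) := by
    rw [show c+n+2 = (c+1+n)+1 by ring, Nat.factorial_succ]; push_cast; ring
  have e2 : ((c+1+1+n)! : ℚ) = ((c:ℚ)+n+2) * ((c+1+n)! : ℚ) := by
    rw [show c+1+1+n = (c+1+n)+1 by ring, Nat.factorial_succ]; push_cast; ring
  have e3 : ((c+1)! : ℚ) = ((c:ℚ)+1) * (c ! : ℚ) := by
    rw [Nat.factorial_succ]; push_cast; ring
  rw [e1, e2, e3]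
  have f1 : ((c+1+n)! : ℚ) ≠ 0 := by exact_mod_cast (Nat.factorial_pos _).ne'
  have f4 : ((n)! : ℚ) ≠ 0 := by exact_mod_cast (Nat.factorial_pos _).ne'
  have f5 : ((c:ℚ)+n+2) ≠ 0 := by positivity
  field_simp
  ring

lemma desc_eval_neg_one (k : ℕ) : (descPochhammer ℤ k).eval (-1) = (-1)^k * (k ! : ℤ) := by
  induction k with
  | zero => simp [descPochhammer_zero]
  | succ k ih =>
      rw [descPochhammer_succ_right, Polynomial.eval_mul, ih]
      simp [Nat.factorial_succ]
      push_cast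
      ring

/-- For integers `n, a, b > 0` with `a(n+1) ≠ bn`, the sum
`∑_{i=0}^{n} (-1)^i (a+i) [b+i-1]_{b-1} C(b+n+1, b+i+1)` equals
`± [-1]_{b-1} (bn - a(n+1))`, and in particular is nonzero. -/
theorem key_sum_nonzero (n a b : ℕ) (hn : 0 < n) (ha : 0 < a) (hb : 0 < b)
    (h : (a : ℤ) * (n + 1) ≠ (b : ℤ) * n) :
    (∃ ε : ℤ, (ε = 1 ∨ ε = -1) ∧
      ∑ i ∈ Finset.range (n + 1),
        (-1 : ℤ) ^ i * ((a : ℤ) + i) * (descPochhammer ℤ (b - 1)).eval ((b : ℤ) + i - 1) *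
          ((b + n + 1).choose (b + i + 1) : ℤ)
        = ε * (descPochhammer ℤ (b - 1)).eval (-1) * ((b : ℤ) * n - a * (n + 1))) ∧
    ∑ i ∈ Finset.range (n + 1),
      (-1 : ℤ) ^ i * ((a : ℤ) + i) * (descPochhammer ℤ (b - 1)).eval ((b : ℤ) + i - 1) *
        ((b + n + 1).choose (b + i + 1) : ℤ) ≠ 0 := by
  obtain ⟨c, rfl⟩ : ∃ c, b = c + 1 := ⟨b - 1, by omega⟩
  have hsummand : ∀ i : ℕ,
      (-1 : ℤ) ^ i * ((a : ℤ) + i) * (descPochhammer ℤ (c + 1 - 1)).eval (((c+1 : ℕ) : ℤ) + (i:ℤ) - 1) *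
          (((c+1) + n + 1).choose ((c+1) + i + 1) : ℤ)
        = (-1 : ℤ) ^ i * ((a : ℤ) + i) * ((c+i).descFactorial c : ℤ) * (((c+n+2)).choose (c+i+2) : ℤ) := by
    intro i
    have hx : ((c+1 : ℕ) : ℤ) + (i:ℤ) - 1 = ((c + i : ℕ) : ℤ) := by push_cast; ring
    rw [show c + 1 - 1 = c by omega, hx, descPochhammer_eval_eq_descFactorial,
        show (c+1)+n+1 = c+n+2 by ring, show (c+1)+i+1 = c+i+2 by ring]
  have hS : ∑ i ∈ Finset.range (n + 1),
      (-1 : ℤ) ^ i * ((a : ℤ) + i) * (descPochhammer ℤ (c + 1 - 1)).eval (((c+1:ℕ) : ℤ) + i - 1) *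
        (((c+1) + n + 1).choose ((c+1) + i + 1) : ℤ)
      = (c ! : ℤ) * ((a:ℤ) * (n+1) - ((c:ℤ)+1) * n) := by
    rw [Finset.sum_congr rfl (fun i _ => hsummand i)]
    have hq := main_sum_eval n c a
    have : ((∑ i ∈ Finset.range (n + 1),
        (-1 : ℤ) ^ i * ((a : ℤ) + i) * ((c+i).descFactorial c : ℤ) * (((c+n+2)).choose (c+i+2) : ℤ) : ℤ) : ℚ)
        = (((c ! : ℤ) * ((a:ℤ) * (n+1) - ((c:ℤ)+1) * n) : ℤ) : ℚ) := by
      push_cast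
      convert hq using 2
    exact_mod_cast this
  constructor
  · refine ⟨(-1)^(c+1), ?_, ?_⟩
    · rcases Nat.even_or_odd (c+1) with he | ho
      · exact Or.inl he.neg_one_pow
      · exact Or.inr ho.neg_one_pow
    · rw [hS, desc_eval_neg_one, show c + 1 - 1 = c by omega]
      have : ((-1:ℤ))^(c+1) * ((-1:ℤ))^c = -1 := by
        rw [← pow_add]
        exact Odd.neg_one_pow ⟨c, by ring⟩
      push_cast
      linear_combination ((c ! : ℤ) * ((a:ℤ) * (n + 1) - ((c:ℤ) + 1) * n)) * this
  · rw [hS]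
    have hc : ((c ! : ℤ)) ≠ 0 := by exact_mod_cast (Nat.factorial_pos c).ne'
    have hne : (a:ℤ) * (n+1) - ((c:ℤ)+1) * n ≠ 0 := by
      intro hcon
      apply h
      push_cast
      linarith
    exact mul_ne_zero hc hne
end

section
/- Let N' ⊆ Z^10 be the subgroup generated by a1,…,a8 (as defined from the standard basis: a1 = e1+e5, a2 = e1+e2+e6, a3 = e1+e2+e3+e7, a4 = e1+e2+e3+e4+e8, a5 = e1+e2+e3+e4+e9, a6 = e1+e2+e3+e4+e10, a7 = e5+e6+e7+e8+e9+e10, a8 = e4+e5+e7). Then the quotient Z^10/N' is generated by the images of u = e1, v = e2, w = e3+e5+e6, and 26u + 15v + 7w ∈ N'. -/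
namespace Stmt14

def e (i : Fin 10) : Fin 10 → ℤ := Pi.single i 1

def a1 : Fin 10 → ℤ := e 0 + e 4
def a2 : Fin 10 → ℤ := e 0 + e 1 + e 5
def a3 : Fin 10 → ℤ := e 0 + e 1 + e 2 + e 6
def a4 : Fin 10 → ℤ := e 0 + e 1 + e 2 + e 3 + e 7
def a5 : Fin 10 → ℤ := e 0 + e 1 + e 2 + e 3 + e 8
def a6 : Fin 10 → ℤ := e 0 + e 1 + e 2 + e 3 + e 9
def a7 : Fin 10 → ℤ := e 4 + e 5 + e 6 + e 7 + e 8 + e 9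
def a8 : Fin 10 → ℤ := e 3 + e 4 + e 6

def u : Fin 10 → ℤ := e 0
def v : Fin 10 → ℤ := e 1
def w : Fin 10 → ℤ := e 2 + e 4 + e 5

/-- The subgroup `N'` generated by `a1,…,a8`. -/
def N' : Submodule ℤ (Fin 10 → ℤ) :=
  Submodule.span ℤ ({a1, a2, a3, a4, a5, a6, a7, a8} : Set (Fin 10 → ℤ))

def S : Set (Fin 10 → ℤ) := {u, v, w, a1, a2, a3, a4, a5, a6, a7, a8}

open Submodule in
lemma basis_mem (i : Fin 10) : e i ∈ Submodule.span ℤ S := by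
  have hu : u ∈ span ℤ S := subset_span (by simp [S])
  have hv : v ∈ span ℤ S := subset_span (by simp [S])
  have hw : w ∈ span ℤ S := subset_span (by simp [S])
  have h1 : a1 ∈ span ℤ S := subset_span (by simp [S])
  have h2 : a2 ∈ span ℤ S := subset_span (by simp [S])
  have h3 : a3 ∈ span ℤ S := subset_span (by simp [S])
  have h4 : a4 ∈ span ℤ S := subset_span (by simp [S])
  have h5 : a5 ∈ span ℤ S := subset_span (by simp [S])
  have h6 : a6 ∈ span ℤ S := subset_span (by simp [S])
  have h8 : a8 ∈ span ℤ S := subset_span (by simp [S])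
  have he0 : e 0 ∈ span ℤ S := hu
  have he1 : e 1 ∈ span ℤ S := hv
  have he4 : e 4 ∈ span ℤ S := by
    have : e 4 = a1 - u := by decide
    rw [this]; exact sub_mem h1 hu
  have he5 : e 5 ∈ span ℤ S := by
    have : e 5 = a2 - u - v := by decide
    rw [this]; exact sub_mem (sub_mem h2 hu) hv
  have he2 : e 2 ∈ span ℤ S := by
    have : e 2 = w - a1 - a2 + (2:ℤ) • u + v := by decide
    rw [this]
    exact add_mem (add_mem (sub_mem (sub_mem hw h1) h2) (smul_mem _ _ hu)) hv
  have he6 : e 6 ∈ span ℤ S := by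
    have : e 6 = a1 + a2 + a3 - w - (3:ℤ) • u - (2:ℤ) • v := by decide
    rw [this]
    exact sub_mem (sub_mem (sub_mem (add_mem (add_mem h1 h2) h3) hw)
      (smul_mem _ _ hu)) (smul_mem _ _ hv)
  have he3 : e 3 ∈ span ℤ S := by
    have : e 3 = a8 - (2:ℤ) • a1 - a2 - a3 + w + (4:ℤ) • u + (2:ℤ) • v := by decide
    rw [this]
    exact add_mem (add_mem (add_mem (sub_mem (sub_mem (sub_mem h8 (smul_mem _ _ h1)) h2) h3)
      hw) (smul_mem _ _ hu)) (smul_mem _ _ hv)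
  have he7 : e 7 ∈ span ℤ S := by
    have : e 7 = a4 - u - v - e 2 - e 3 := by decide
    rw [this]; exact sub_mem (sub_mem (sub_mem (sub_mem h4 hu) hv) he2) he3
  have he8 : e 8 ∈ span ℤ S := by
    have : e 8 = a5 - u - v - e 2 - e 3 := by decide
    rw [this]; exact sub_mem (sub_mem (sub_mem (sub_mem h5 hu) hv) he2) he3
  have he9 : e 9 ∈ span ℤ S := by
    have : e 9 = a6 - u - v - e 2 - e 3 := by decide
    rw [this]; exact sub_mem (sub_mem (sub_mem (sub_mem h6 hu) hv) he2) he3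
  fin_cases i <;> assumption

open Submodule in
lemma span_S_top : Submodule.span ℤ S = ⊤ := by
  rw [eq_top_iff]
  rw [← (Pi.basisFun ℤ (Fin 10)).span_eq]
  apply span_le.mpr
  rintro x ⟨i, rfl⟩
  simpa [e] using basis_mem i

/-- `ℤ^10 / N'` is generated by the images of `u, v, w`, and `26u + 15v + 7w ∈ N'`. -/
theorem quotient_generated_and_relation :
    Submodule.span ℤ
        ({Submodule.Quotient.mk u, Submodule.Quotient.mk v, Submodule.Quotient.mk w} :
          Set ((Fin 10 → ℤ) ⧸ N')) = ⊤ ∧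
      (26 : ℤ) • u + (15 : ℤ) • v + (7 : ℤ) • w ∈ N' := by
  have hmemN : ∀ x ∈ ({a1, a2, a3, a4, a5, a6, a7, a8} : Set (Fin 10 → ℤ)), x ∈ N' :=
    fun x hx => Submodule.subset_span hx
  constructor
  · rw [eq_top_iff]
    have hmap : Submodule.map N'.mkQ (Submodule.span ℤ S) = ⊤ := by
      rw [span_S_top, Submodule.map_top, Submodule.range_mkQ]
    rw [Submodule.map_span] at hmap
    rw [← hmap]
    apply Submodule.span_le.mpr
    rintro x ⟨y, hy, rfl⟩
    have hz : ∀ z ∈ ({a1, a2, a3, a4, a5, a6, a7, a8} : Set (Fin 10 → ℤ)),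
        N'.mkQ z ∈ Submodule.span ℤ
          ({Submodule.Quotient.mk u, Submodule.Quotient.mk v, Submodule.Quotient.mk w} :
            Set ((Fin 10 → ℤ) ⧸ N')) := by
      intro z hzmem
      have : N'.mkQ z = 0 := by
        rw [Submodule.mkQ_apply, Submodule.Quotient.mk_eq_zero]
        exact hmemN z hzmem
      rw [this]; exact zero_mem _
    simp only [S, Set.mem_insert_iff, Set.mem_singleton_iff] at hy
    rcases hy with rfl | rfl | rfl | hy
    · exact Submodule.subset_span (by simp [Submodule.mkQ_apply])
    · exact Submodule.subset_span (by simp [Submodule.mkQ_apply])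
    · exact Submodule.subset_span (by simp [Submodule.mkQ_apply])
    · rcases hy with rfl | rfl | rfl | rfl | rfl | rfl | rfl | rfl <;>
        exact hz _ (by simp)
  · have h1 : a1 ∈ N' := hmemN a1 (by simp)
    have h2 : a2 ∈ N' := hmemN a2 (by simp)
    have h3 : a3 ∈ N' := hmemN a3 (by simp)
    have h4 : a4 ∈ N' := hmemN a4 (by simp)
    have h5 : a5 ∈ N' := hmemN a5 (by simp)
    have h6 : a6 ∈ N' := hmemN a6 (by simp)
    have h7 : a7 ∈ N' := hmemN a7 (by simp)
    have h8 : a8 ∈ N' := hmemN a8 (by simp)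
    have heq : (26 : ℤ) • u + (15 : ℤ) • v + (7 : ℤ) • w =
        (11:ℤ) • a1 + (8:ℤ) • a2 + (4:ℤ) • a3 + a4 + a5 + a6 - a7 - (3:ℤ) • a8 := by decide
    rw [heq]
    exact sub_mem (sub_mem (add_mem (add_mem (add_mem (add_mem (add_mem
      (Submodule.smul_mem _ _ h1) (Submodule.smul_mem _ _ h2))
      (Submodule.smul_mem _ _ h3)) h4) h5) h6) h7) (Submodule.smul_mem _ _ h8)

end Stmt14
end
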